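/- With τ₁ = (X₁+X₂)(X₂+X₃)/(X₂(X₁+X₂+X₃)) and τᵢ = (Xᵢ+Xᵢ₊₁)(Xᵢ₊₁+Xᵢ₊₂)/(Xᵢ₊₁(Xᵢ+Xᵢ₊₁+Xᵢ₊₂)), and the Poisson bracket determined by {Xᵢ,Xⱼ} = 2XᵢXⱼ for i<j, one has {τ₁,τᵢ} = 0 for all i ≥ 4 (locality of the lattice W₂ algebra). -/

import Mathlib

/-- Partial derivative with respect to the `k`-th coordinate (variables indexed by `ℕ`). -/
noncomputable def pdN (f : (ℕ → ℝ) → ℝ) (k : ℕ) (x : ℕ → ℝ) : ℝ :=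
  deriv (fun t => f (Function.update x k t)) (x k)

/-- Poisson bracket determined by `{Xₐ,X_b} = 2XₐX_b` for `a < b`, with the sum taken
over the indices `0, …, N−1` (which covers the supports of the functions involved). -/
noncomputable def pbN (N : ℕ) (f g : (ℕ → ℝ) → ℝ) (x : ℕ → ℝ) : ℝ :=
  ∑ a ∈ Finset.range N, ∑ b ∈ Finset.range N,
    if a < b then (pdN f a x * pdN g b x - pdN f b x * pdN g a x) * (2 * x a * x b) else 0

/-- `τ_k = (X_k+X_{k+1})(X_{k+1}+X_{k+2})/(X_{k+1}(X_k+X_{k+1}+X_{k+2}))` (1-based indices). -/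
noncomputable def tauN (k : ℕ) (x : ℕ → ℝ) : ℝ :=
  (x k + x (k + 1)) * (x (k + 1) + x (k + 2)) / (x (k + 1) * (x k + x (k + 1) + x (k + 2)))

lemma pd_zero (k j : ℕ) (x : ℕ → ℝ) (h1 : j ≠ k) (h2 : j ≠ k+1) (h3 : j ≠ k+2) :
    pdN (tauN k) j x = 0 := by
  have : (fun t => tauN k (Function.update x j t)) = fun _ => tauN k x := by
    funext t
    simp [tauN, Function.update_of_ne h1.symm, Function.update_of_ne h2.symm,
      Function.update_of_ne h3.symm]
  rw [pdN, this, deriv_const]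

lemma euler (k : ℕ) (x : ℕ → ℝ) (hb : x (k+1) ≠ 0) (hs : x k + x (k+1) + x (k+2) ≠ 0) :
    x k * pdN (tauN k) k x + x (k+1) * pdN (tauN k) (k+1) x
      + x (k+2) * pdN (tauN k) (k+2) x = 0 := by
  set a := x k with ha
  set b := x (k+1) with hb'
  set c := x (k+2) with hc
  have hd : b * (a + b + c) ≠ 0 := mul_ne_zero hb hs
  have e1 : (fun t => tauN k (Function.update x k t)) =
      fun t => (t + b) * (b + c) / (b * (t + b + c)) := by
    funext t
    simp [tauN, Function.update_self, Function.update_of_ne (by omega : k+1 ≠ k),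
      Function.update_of_ne (by omega : k+2 ≠ k)] <;> rfl
  have e2 : (fun t => tauN k (Function.update x (k+1) t)) =
      fun t => (a + t) * (t + c) / (t * (a + t + c)) := by
    funext t
    simp [tauN, Function.update_self, Function.update_of_ne (by omega : k ≠ k+1),
      Function.update_of_ne (by omega : k+2 ≠ k+1)] <;> rfl
  have e3 : (fun t => tauN k (Function.update x (k+2) t)) =
      fun t => (a + b) * (b + t) / (b * (a + b + t)) := by
    funext t
    simp [tauN, Function.update_self, Function.update_of_ne (by omega : k ≠ k+2),
      Function.update_of_ne (by omega : k+1 ≠ k+2)] <;> rfl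
  have d1 : HasDerivAt (fun t => (t + b) * (b + c) / (b * (t + b + c)))
      ((1 * (b + c) * (b * (a + b + c)) - (a + b) * (b + c) * (b * 1)) / (b * (a + b + c)) ^ 2) a := by
    have hdd : HasDerivAt (fun t : ℝ => b * (t + b + c)) (b * 1) a := by
      have := ((hasDerivAt_id a).add_const (b+c)).const_mul b
      convert this using 2 <;> (try simp only [id_eq]) <;> (try ring) <;> (try rfl)
    exact ((((hasDerivAt_id a).add_const b).mul_const (b+c)).div hdd hd)
  have d2 : HasDerivAt (fun t => (a + t) * (t + c) / (t * (a + t + c)))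
      (((1 * (b + c) + (a + b) * 1) * (b * (a + b + c))
        - (a + b) * (b + c) * (1 * (a + b + c) + b * 1)) / (b * (a + b + c)) ^ 2) b := by
    have hn : HasDerivAt (fun t : ℝ => (a + t) * (t + c)) (1 * (b + c) + (a + b) * 1) b :=
      ((hasDerivAt_id b).const_add a).mul ((hasDerivAt_id b).add_const c)
    have hdd : HasDerivAt (fun t : ℝ => t * (a + t + c)) (1 * (a + b + c) + b * 1) b := by
      have := (hasDerivAt_id b).mul (((hasDerivAt_id b).const_add a).add_const c)
      convert this using 1 <;> (try funext t) <;> (try simp only [Pi.mul_apply, id_eq]) <;> rfl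
    exact hn.div hdd (by convert hd using 2 <;> (try simp only [id_eq]) <;> (try ring) <;> (try rfl))
  have d3 : HasDerivAt (fun t => (a + b) * (b + t) / (b * (a + b + t)))
      (((a + b) * 1 * (b * (a + b + c)) - (a + b) * (b + c) * (b * 1)) / (b * (a + b + c)) ^ 2) c := by
    have hn : HasDerivAt (fun t : ℝ => (a + b) * (b + t)) ((a + b) * 1) c := by
      have := (((hasDerivAt_id c).const_add b).const_mul (a+b))
      convert this using 1 <;> (try simp only [id_eq]) <;> (try ring) <;> (try rfl)
    have hdd : HasDerivAt (fun t : ℝ => b * (a + b + t)) (b * 1) c :=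
      (((hasDerivAt_id c).const_add (a+b)).const_mul b)
    exact hn.div hdd (by convert hd using 2 <;> (try simp only [id_eq]) <;> (try ring) <;> (try rfl))
  rw [pdN, pdN, pdN, ← ha, ← hb', ← hc, e1, e2, e3, d1.deriv, d2.deriv, d3.deriv]
  field_simp
  ring

/-- Locality of the lattice `W₂` algebra: `{τ₁, τᵢ} = 0` for all `i ≥ 4`. -/
theorem stmt_5 (i : ℕ) (hi : 4 ≤ i) (x : ℕ → ℝ)
    (h1 : x 2 ≠ 0) (h2 : x 1 + x 2 + x 3 ≠ 0)
    (h3 : x (i + 1) ≠ 0) (h4 : x i + x (i + 1) + x (i + 2) ≠ 0) :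
    pbN (i + 3) (tauN 1) (tauN i) x = 0 := by
  have key : ∀ a b : ℕ,
      (if a < b then (pdN (tauN 1) a x * pdN (tauN i) b x
          - pdN (tauN 1) b x * pdN (tauN i) a x) * (2 * x a * x b) else 0)
      = 2 * (x a * pdN (tauN 1) a x) * (x b * pdN (tauN i) b x) := by
    intro a b
    by_cases hab : a < b
    · rw [if_pos hab]
      rcases le_or_gt 4 b with hb4 | hb4
      · rw [pd_zero 1 b x (by omega) (by omega) (by omega)]; ring
      · rw [pd_zero i a x (by omega) (by omega) (by omega)]; ring
    · rw [if_neg hab]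
      rcases le_or_gt 4 a with ha4 | ha4
      · rw [pd_zero 1 a x (by omega) (by omega) (by omega)]; ring
      · rw [pd_zero i b x (by omega) (by omega) (by omega)]; ring
  have hsum1 : ∑ a ∈ Finset.range (i + 3), x a * pdN (tauN 1) a x = 0 := by
    rw [← Finset.sum_subset (s₁ := ({1, 2, 3} : Finset ℕ))
        (by intro a ha; fin_cases ha <;> simp <;> omega)
        (by intro a _ ha
            have h1' : a ≠ 1 := by simp at ha; omega
            have h2' : a ≠ 2 := by simp at ha; omega
            have h3' : a ≠ 3 := by simp at ha; omega
            rw [pd_zero 1 a x h1' h2' h3']; ring)]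
    have := euler 1 x h1 h2
    simp [Finset.sum_insert, Finset.mem_insert, Finset.mem_singleton, Finset.sum_singleton] at *
    norm_num
    linarith [this]
  simp only [pbN]
  calc ∑ a ∈ Finset.range (i+3), ∑ b ∈ Finset.range (i+3),
        (if a < b then (pdN (tauN 1) a x * pdN (tauN i) b x
          - pdN (tauN 1) b x * pdN (tauN i) a x) * (2 * x a * x b) else 0)
      = ∑ a ∈ Finset.range (i+3), ∑ b ∈ Finset.range (i+3),
        2 * (x a * pdN (tauN 1) a x) * (x b * pdN (tauN i) b x) := by
        exact Finset.sum_congr rfl fun a _ => Finset.sum_congr rfl fun b _ => key a b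
    _ = 2 * (∑ a ∈ Finset.range (i+3), x a * pdN (tauN 1) a x)
          * (∑ b ∈ Finset.range (i+3), x b * pdN (tauN i) b x) := by
        rw [mul_assoc, Finset.sum_mul_sum, Finset.mul_sum]
        refine Finset.sum_congr rfl fun a _ => ?_
        rw [Finset.mul_sum]
        exact Finset.sum_congr rfl fun b _ => by ring
    _ = 0 := by rw [hsum1]; ring
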